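/- Every symmetric positive definite matrix Y with Tr(Y) = 1 can be written as Y = exp(V)/Tr(exp(V)) for some symmetric matrix V; moreover, for a fixed Ȳ = exp(V̄)/Tr(exp(V̄)) and ζ ∈ Sⁿ, the minimizer of Ent(W) + Tr(W·(ζ − Ent'(Ȳ))) over the spectahedron Δₙᴹ is H(V̄ − ζ) := exp(V̄ − ζ)/Tr(exp(V̄ − ζ)). -/

import Mathlib

open Matrix

/-- Matrix entropy of a symmetric matrix via eigenvalues (junk value `0` otherwise). -/
noncomputable def matEnt {n : ℕ} (Y : Matrix (Fin n) (Fin n) ℝ) : ℝ :=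
  if h : Y.IsHermitian then ∑ i, h.eigenvalues i * Real.log (h.eigenvalues i) else 0

/-- The map `H(V) = exp(V) / Tr(exp V)`. -/
noncomputable def matH {n : ℕ} (V : Matrix (Fin n) (Fin n) ℝ) : Matrix (Fin n) (Fin n) ℝ :=
  ((NormedSpace.exp V).trace)⁻¹ • NormedSpace.exp V

namespace SpectahedronAux

variable {n : ℕ}
variable {U : Matrix (Fin n) (Fin n) ℝ}

lemma conj_pow (h1 : U * star U = 1) (h2 : star U * U = 1) (M : Matrix (Fin n) (Fin n) ℝ) (k : ℕ) :
    (U * M * star U) ^ k = U * M ^ k * star U := by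
  induction k with
  | zero => simpa [pow_zero] using h1.symm
  | succ k ih =>
      rw [pow_succ, ih, pow_succ]
      have : U * M ^ k * star U * (U * M * star U) = U * M ^ k * (star U * U) * (M * star U) := by
        simp only [mul_assoc]
      rw [this, h2, mul_one]
      simp only [mul_assoc]

lemma trace_conj (h2 : star U * U = 1) (M : Matrix (Fin n) (Fin n) ℝ) :
    (U * M * star U).trace = M.trace := by
  rw [trace_mul_cycle, h2, one_mul]

lemma aeval_conj (h1 : U * star U = 1) (h2 : star U * U = 1) (d : Fin n → ℝ) (q : Polynomial ℝ) :
    Polynomial.aeval (U * diagonal d * star U) q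
      = U * diagonal (fun i => q.eval (d i)) * star U := by
  induction q using Polynomial.induction_on' with
  | add p q hp hq =>
      rw [map_add, hp, hq,
        show (fun i => Polynomial.eval (d i) (p + q))
            = fun i => Polynomial.eval (d i) p + Polynomial.eval (d i) q from
          funext fun i => by simp,
        ← diagonal_add, mul_add, add_mul]
  | monomial k a =>
      rw [Polynomial.aeval_monomial, conj_pow h1 h2, diagonal_pow,
        Algebra.algebraMap_eq_smul_one (A := Matrix (Fin n) (Fin n) ℝ) a,
        show (fun i => Polynomial.eval (d i) (Polynomial.monomial k a)) = a • (d ^ k) from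
          funext fun i => by simp [Polynomial.eval_monomial],
        diagonal_smul]
      simp [smul_mul_assoc, mul_smul_comm]

lemma trace_aeval_conj (h1 : U * star U = 1) (h2 : star U * U = 1) (d : Fin n → ℝ)
    (q : Polynomial ℝ) :
    (Polynomial.aeval (U * diagonal d * star U) q).trace = ∑ i, q.eval (d i) := by
  rw [aeval_conj h1 h2, trace_conj h2, trace_diagonal]

/-- spectral theorem specialized to ℝ -/
lemma spectral_real {Y : Matrix (Fin n) (Fin n) ℝ} (hY : Y.IsHermitian) :
    Y = (hY.eigenvectorUnitary : Matrix (Fin n) (Fin n) ℝ) * diagonal hY.eigenvalues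
        * star (hY.eigenvectorUnitary : Matrix (Fin n) (Fin n) ℝ) := by
  conv_lhs => rw [hY.spectral_theorem]
  congr 2

lemma sum_f_eigenvalues {Y : Matrix (Fin n) (Fin n) ℝ} (hY : Y.IsHermitian)
    (d : Fin n → ℝ) (h1 : U * star U = 1) (h2 : star U * U = 1)
    (hdec : Y = U * diagonal d * star U) (f : ℝ → ℝ) :
    ∑ i, f (hY.eigenvalues i) = ∑ i, f (d i) := by
  classical
  set U' : Matrix (Fin n) (Fin n) ℝ := (hY.eigenvectorUnitary : Matrix (Fin n) (Fin n) ℝ)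
  have h1' : U' * star U' = 1 := mem_unitaryGroup_iff.mp hY.eigenvectorUnitary.2
  have h2' : star U' * U' = 1 := mem_unitaryGroup_iff'.mp hY.eigenvectorUnitary.2
  set s : Finset ℝ := Finset.image hY.eigenvalues Finset.univ ∪ Finset.image d Finset.univ
  have hinj : Set.InjOn (id : ℝ → ℝ) s := Function.injective_id.injOn
  set q : Polynomial ℝ := Lagrange.interpolate s id f
  have hq : ∀ x ∈ s, q.eval x = f x := by
    intro x hx
    exact Lagrange.eval_interpolate_at_node f hinj hx
  have e1 : ∑ i, f (hY.eigenvalues i) = ∑ i, q.eval (hY.eigenvalues i) :=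
    Finset.sum_congr rfl fun i _ => (hq _ (by simp [s])).symm
  have e2 : ∑ i, f (d i) = ∑ i, q.eval (d i) :=
    Finset.sum_congr rfl fun i _ => (hq _ (by simp [s])).symm
  rw [e1, e2, ← trace_aeval_conj h1 h2 d q, ← trace_aeval_conj h1' h2' hY.eigenvalues q,
    ← hdec, ← spectral_real hY]

lemma herm_conj (d : Fin n → ℝ) :
    (U * diagonal d * star U).IsHermitian := by
  unfold Matrix.IsHermitian
  rw [← star_eq_conjTranspose, Matrix.star_mul, Matrix.star_mul, star_star]
  rw [show star (diagonal d) = diagonal d by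
    rw [star_eq_conjTranspose, diagonal_conjTranspose]; simp]
  simp [mul_assoc]

set_option maxHeartbeats 1000000 in
lemma exp_conj_diag (h1 : U * star U = 1) (h2 : star U * U = 1) (d : Fin n → ℝ) :
    NormedSpace.exp (U * diagonal d * star U)
      = U * diagonal (fun i => Real.exp (d i)) * star U := by
  let u : (Matrix (Fin n) (Fin n) ℝ)ˣ := ⟨U, star U, by exact h1, by exact h2⟩
  have hco : (u : Matrix (Fin n) (Fin n) ℝ) = U := rfl
  have hinv : (↑u⁻¹ : Matrix (Fin n) (Fin n) ℝ) = star U := rfl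
  calc NormedSpace.exp (U * diagonal d * star U)
      = NormedSpace.exp ((u : Matrix (Fin n) (Fin n) ℝ) * diagonal d * ↑u⁻¹) := by
        rw [hco, hinv]
    _ = (u : Matrix (Fin n) (Fin n) ℝ) * NormedSpace.exp (diagonal d) * ↑u⁻¹ :=
        Matrix.exp_units_conj u _
    _ = U * diagonal (fun i => Real.exp (d i)) * star U := by
        rw [hco, hinv, Matrix.exp_diagonal, Pi.exp_def]
        congr 2
        funext i
        rw [← Real.exp_eq_exp_ℝ]

lemma trace_diagonal_mul (g : Fin n → ℝ) (B : Matrix (Fin n) (Fin n) ℝ) :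
    (diagonal g * B).trace = ∑ i, g i * B i i := by
  rw [trace]
  apply Finset.sum_congr rfl
  intro i _
  rw [Matrix.diag_apply, Matrix.mul_apply]
  simp [diagonal_apply]

/-- scalar Gibbs inequality -/
lemma gibbs (hn : 0 < n) (μ a : Fin n → ℝ) (hμ0 : ∀ i, 0 ≤ μ i) (hμ1 : ∑ i, μ i = 1) :
    ∑ i, μ i * a i - ∑ i, μ i * Real.log (μ i) ≤ Real.log (∑ i, Real.exp (a i)) := by
  have : Nonempty (Fin n) := ⟨⟨0, hn⟩⟩
  set S : ℝ := ∑ i, Real.exp (a i) with hS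
  have hSpos : 0 < S := Finset.sum_pos (fun i _ => Real.exp_pos _) Finset.univ_nonempty
  have key : ∀ i, μ i * a i - μ i * Real.log (μ i) - μ i * Real.log S
      ≤ Real.exp (a i) / S - μ i := by
    intro i
    rcases eq_or_lt_of_le (hμ0 i) with h0 | hpos
    · rw [← h0]
      simp only [zero_mul, sub_zero, sub_self, zero_sub, neg_zero, sub_zero]
      positivity
    · set x : ℝ := Real.exp (a i) / (S * μ i) with hx
      have hxpos : 0 < x := by positivity
      have hlogx : Real.log x = a i - Real.log S - Real.log (μ i) := by
        rw [hx, Real.log_div (Real.exp_ne_zero _) (by positivity), Real.log_exp,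
          Real.log_mul (ne_of_gt hSpos) (ne_of_gt hpos)]
        ring
      have := Real.log_le_sub_one_of_pos hxpos
      have h2 := mul_le_mul_of_nonneg_left this (le_of_lt hpos)
      calc μ i * a i - μ i * Real.log (μ i) - μ i * Real.log S
          = μ i * Real.log x := by rw [hlogx]; ring
        _ ≤ μ i * (x - 1) := h2
        _ = Real.exp (a i) / S - μ i := by
            rw [hx]; field_simp
  have hsum := Finset.sum_le_sum (fun i (_ : i ∈ Finset.univ) => key i)
  rw [Finset.sum_sub_distrib, Finset.sum_sub_distrib, Finset.sum_sub_distrib] at hsum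
  have e1 : ∑ x, μ x * Real.log S = Real.log S := by
    rw [← Finset.sum_mul, hμ1, one_mul]
  have e2 : ∑ x, Real.exp (a x) / S = 1 := by
    rw [← Finset.sum_div, ← hS, div_self (ne_of_gt hSpos)]
  rw [e1, e2, hμ1] at hsum
  linarith

lemma conj_mul_conj (h2 : star U * U = 1) (d e : Fin n → ℝ) :
    (U * diagonal d * star U) * (U * diagonal e * star U)
      = U * diagonal (fun i => d i * e i) * star U := by
  have : (U * diagonal d * star U) * (U * diagonal e * star U)
      = U * diagonal d * (star U * U) * (diagonal e * star U) := by simp only [mul_assoc]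
  rw [this, h2, mul_one, show U * diagonal d * (diagonal e * star U)
      = U * (diagonal d * diagonal e) * star U by simp only [mul_assoc],
    diagonal_mul_diagonal]

lemma conj_diag_apply (V : Matrix (Fin n) (Fin n) ℝ) (d : Fin n → ℝ) (i : Fin n) :
    (V * diagonal d * star V) i i = ∑ j, (V i j) ^ 2 * d j := by
  rw [Matrix.mul_apply]
  apply Finset.sum_congr rfl
  intro j _
  rw [Matrix.mul_diagonal, star_eq_conjTranspose, Matrix.conjTranspose_apply]
  simp [sq]
  ring

end SpectahedronAux

namespace SpectahedronAux

lemma matEnt_eq {n : ℕ} {Y : Matrix (Fin n) (Fin n) ℝ} (h : Y.IsHermitian) :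
    matEnt Y = ∑ i, h.eigenvalues i * Real.log (h.eigenvalues i) := dif_pos h

set_option maxHeartbeats 1000000 in
lemma part2 {n : ℕ} (hn : 0 < n) {A : Matrix (Fin n) (Fin n) ℝ} (hA : A.IsHermitian) :
    (matH A).PosSemidef ∧ (matH A).trace = 1 ∧
    ∀ W : Matrix (Fin n) (Fin n) ℝ, W.PosSemidef → W.trace = 1 →
      matEnt (matH A) - (matH A * A).trace ≤ matEnt W - (W * A).trace := by
  have hne : Nonempty (Fin n) := ⟨⟨0, hn⟩⟩
  set U : Matrix (Fin n) (Fin n) ℝ := (hA.eigenvectorUnitary : Matrix (Fin n) (Fin n) ℝ) with hU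
  have h1 : U * star U = 1 := mem_unitaryGroup_iff.mp hA.eigenvectorUnitary.2
  have h2 : star U * U = 1 := mem_unitaryGroup_iff'.mp hA.eigenvectorUnitary.2
  set μ : Fin n → ℝ := hA.eigenvalues with hμ
  have hdec : A = U * diagonal μ * star U := spectral_real hA
  set Z : ℝ := ∑ i, Real.exp (μ i) with hZ
  have hZpos : 0 < Z := Finset.sum_pos (fun i _ => Real.exp_pos _) Finset.univ_nonempty
  have hexp : NormedSpace.exp A = U * diagonal (fun i => Real.exp (μ i)) * star U := by
    conv_lhs => rw [hdec]
    exact exp_conj_diag h1 h2 μ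
  have htrexp : (NormedSpace.exp A).trace = Z := by
    rw [hexp, trace_conj h2, trace_diagonal]
  set p : Fin n → ℝ := fun i => Real.exp (μ i) / Z with hp
  have hHdec : matH A = U * diagonal p * star U := by
    rw [matH, htrexp, hexp,
      show diagonal p = Z⁻¹ • diagonal (fun i => Real.exp (μ i)) by
        ext i j
        rcases eq_or_ne i j with rfl | hij
        · simp [hp, div_eq_inv_mul]
        · simp [diagonal_apply_ne _ hij]]
    simp only [mul_smul_comm, smul_mul_assoc]
  have hpsd : (matH A).PosSemidef := by
    rw [hHdec, star_eq_conjTranspose]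
    exact (posSemidef_diagonal_iff.mpr fun i => by
      exact div_nonneg (Real.exp_pos _).le hZpos.le).mul_mul_conjTranspose_same U
  have hsump : ∑ i, p i = 1 := by
    rw [hp]
    rw [← Finset.sum_div, ← hZ, div_self (ne_of_gt hZpos)]
  have htr1 : (matH A).trace = 1 := by
    rw [hHdec, trace_conj h2, trace_diagonal]
    exact hsump
  have hument : matEnt (matH A) = ∑ i, p i * Real.log (p i) := by
    have hh : (matH A).IsHermitian := hHdec ▸ herm_conj p
    rw [matEnt_eq hh]
    exact sum_f_eigenvalues hh p h1 h2 hHdec (fun x => x * Real.log x)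
  have hlogp : ∀ i, Real.log (p i) = μ i - Real.log Z := fun i => by
    rw [hp]
    rw [Real.log_div (Real.exp_ne_zero _) (ne_of_gt hZpos), Real.log_exp]
  have htrHA : (matH A * A).trace = ∑ i, p i * μ i := by
    conv_lhs => rw [hHdec, hdec]
    rw [conj_mul_conj h2, trace_conj h2, trace_diagonal]
  have hmain_eq : matEnt (matH A) - (matH A * A).trace = - Real.log Z := by
    rw [hument, htrHA]
    have : ∑ i, p i * Real.log (p i) = ∑ i, p i * μ i - Real.log Z :=
      calc ∑ i, p i * Real.log (p i) = ∑ i, (p i * μ i - p i * Real.log Z) :=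
            Finset.sum_congr rfl fun i _ => by rw [hlogp i]; ring
        _ = ∑ i, p i * μ i - (∑ i, p i) * Real.log Z := by
            rw [Finset.sum_sub_distrib, Finset.sum_mul]
        _ = ∑ i, p i * μ i - Real.log Z := by rw [hsump, one_mul]
    rw [this]
    ring
  refine ⟨hpsd, htr1, ?_⟩
  intro W hWpsd hWtr
  have hW : W.IsHermitian := hWpsd.1
  set U' : Matrix (Fin n) (Fin n) ℝ := (hW.eigenvectorUnitary : Matrix (Fin n) (Fin n) ℝ) with hU'
  have h1' : U' * star U' = 1 := mem_unitaryGroup_iff.mp hW.eigenvectorUnitary.2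
  have h2' : star U' * U' = 1 := mem_unitaryGroup_iff'.mp hW.eigenvectorUnitary.2
  set ν : Fin n → ℝ := hW.eigenvalues with hν
  have hdecW : W = U' * diagonal ν * star U' := spectral_real hW
  have hν0 : ∀ i, 0 ≤ ν i := fun i => hWpsd.eigenvalues_nonneg i
  have hν1 : ∑ i, ν i = 1 := by
    have h := trace_conj h2' (diagonal ν)
    rw [← hdecW, hWtr, trace_diagonal] at h
    exact h.symm
  set V : Matrix (Fin n) (Fin n) ℝ := star U' * U with hVdef
  have hstarV : star V = star U * U' := by rw [hVdef, Matrix.star_mul, star_star]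
  have hV1 : V * star V = 1 := by
    rw [hVdef, hstarV,
      show star U' * U * (star U * U') = star U' * (U * star U) * U' by simp only [mul_assoc],
      h1, mul_one, h2']
  have hV2 : star V * V = 1 := by
    rw [hVdef, hstarV,
      show star U * U' * (star U' * U) = star U * (U' * star U') * U by simp only [mul_assoc],
      h1', mul_one, h2]
  set a : Fin n → ℝ := fun i => ∑ j, (V i j) ^ 2 * μ j with ha
  have hrow : ∀ i, ∑ j, (V i j) ^ 2 = 1 := by
    intro i
    calc ∑ j, (V i j) ^ 2 = (V * star V) i i := by
          rw [Matrix.mul_apply]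
          apply Finset.sum_congr rfl
          intro j _
          rw [star_eq_conjTranspose, conjTranspose_apply]
          simp [sq]
      _ = 1 := by rw [hV1, one_apply_eq]
  have hcol : ∀ j, ∑ i, (V i j) ^ 2 = 1 := by
    intro j
    calc ∑ i, (V i j) ^ 2 = (star V * V) j j := by
          rw [Matrix.mul_apply]
          apply Finset.sum_congr rfl
          intro i _
          rw [star_eq_conjTranspose, conjTranspose_apply]
          simp [sq]
      _ = 1 := by rw [hV2, one_apply_eq]
  have htrWA : (W * A).trace = ∑ i, ν i * a i := by
    conv_lhs => rw [hdecW, hdec]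
    have hre : U' * diagonal ν * star U' * (U * diagonal μ * star U)
        = U' * (diagonal ν * (V * diagonal μ * star V)) * star U' := by
      rw [hVdef, hstarV]
      conv_lhs => rw [← mul_one (U' * diagonal ν * star U' * (U * diagonal μ * star U)), ← h1']
      simp only [mul_assoc]
    rw [hre, trace_conj h2', trace_diagonal_mul]
    apply Finset.sum_congr rfl
    intro i _
    rw [conj_diag_apply]
  have hjensen : ∀ i, Real.exp (a i) ≤ ∑ j, (V i j) ^ 2 * Real.exp (μ j) := by
    intro i
    have := convexOn_exp.map_sum_le (t := Finset.univ) (w := fun j => (V i j) ^ 2) (p := μ)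
      (fun j _ => sq_nonneg _) (hrow i) (fun j _ => Set.mem_univ _)
    simpa [smul_eq_mul, ha] using this
  have hexpapos : 0 < ∑ i, Real.exp (a i) :=
    Finset.sum_pos (fun i _ => Real.exp_pos _) Finset.univ_nonempty
  have hsumexp : ∑ i, Real.exp (a i) ≤ Z := by
    calc ∑ i, Real.exp (a i) ≤ ∑ i, ∑ j, (V i j) ^ 2 * Real.exp (μ j) :=
          Finset.sum_le_sum fun i _ => hjensen i
      _ = ∑ j, (∑ i, (V i j) ^ 2) * Real.exp (μ j) := by
          rw [Finset.sum_comm]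
          apply Finset.sum_congr rfl
          intro j _
          rw [Finset.sum_mul]
      _ = Z := by
          rw [hZ]
          apply Finset.sum_congr rfl
          intro j _
          rw [hcol j, one_mul]
  have hentW : matEnt W = ∑ i, ν i * Real.log (ν i) := matEnt_eq hW
  have hgibbs := gibbs hn ν a hν0 hν1
  have hlog := Real.log_le_log hexpapos hsumexp
  rw [hmain_eq, hentW, htrWA]
  linarith

lemma part1 {n : ℕ} {Y : Matrix (Fin n) (Fin n) ℝ} (hpd : Y.PosDef) (htr : Y.trace = 1) :
    ∃ V : Matrix (Fin n) (Fin n) ℝ, V.IsHermitian ∧ Y = matH V := by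
  have hY : Y.IsHermitian := hpd.1
  set U : Matrix (Fin n) (Fin n) ℝ := (hY.eigenvectorUnitary : Matrix (Fin n) (Fin n) ℝ) with hU
  have h1 : U * star U = 1 := mem_unitaryGroup_iff.mp hY.eigenvectorUnitary.2
  have h2 : star U * U = 1 := mem_unitaryGroup_iff'.mp hY.eigenvectorUnitary.2
  refine ⟨U * diagonal (fun i => Real.log (hY.eigenvalues i)) * star U, herm_conj _, ?_⟩
  have hexp : NormedSpace.exp (U * diagonal (fun i => Real.log (hY.eigenvalues i)) * star U)
      = U * diagonal (fun i => Real.exp (Real.log (hY.eigenvalues i))) * star U :=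
    exp_conj_diag h1 h2 _
  have hev : (fun i => Real.exp (Real.log (hY.eigenvalues i))) = hY.eigenvalues :=
    funext fun i => Real.exp_log (hpd.eigenvalues_pos i)
  rw [matH, hexp, hev, ← spectral_real hY, htr]
  simp

end SpectahedronAux

/-- (i) Every symmetric positive definite matrix of trace 1 is of the form
`exp(V)/Tr(exp V)` for some symmetric `V`; (ii) for `Ȳ = H(V̄)` and symmetric `ζ`,
the minimizer over the spectahedron of `W ↦ Ent(W) + Tr(W (ζ − Ent'(Ȳ)))` is
`H(V̄ − ζ)`, where `Ent'(Ȳ) = ln Ȳ + Iₙ = V̄ + (1 − ln Tr(exp V̄)) Iₙ`. -/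
theorem spectahedron_entropy_prox {n : ℕ} (hn : 0 < n) :
    (∀ Y : Matrix (Fin n) (Fin n) ℝ, Y.PosDef → Y.trace = 1 →
      ∃ V : Matrix (Fin n) (Fin n) ℝ, V.IsHermitian ∧ Y = matH V) ∧
    (∀ (Vbar ζ : Matrix (Fin n) (Fin n) ℝ), Vbar.IsHermitian → ζ.IsHermitian →
      -- Ent'(Ȳ) for Ȳ = H(V̄):
      ∀ EntGrad : Matrix (Fin n) (Fin n) ℝ,
        EntGrad = Vbar + (1 - Real.log ((NormedSpace.exp Vbar).trace)) • (1 : Matrix (Fin n) (Fin n) ℝ) →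
      matH (Vbar - ζ) ∈ {Y : Matrix (Fin n) (Fin n) ℝ | Y.PosSemidef ∧ Y.trace = 1} ∧
      ∀ W ∈ {Y : Matrix (Fin n) (Fin n) ℝ | Y.PosSemidef ∧ Y.trace = 1},
        matEnt (matH (Vbar - ζ)) + ((matH (Vbar - ζ)) * (ζ - EntGrad)).trace ≤
          matEnt W + (W * (ζ - EntGrad)).trace) := by
  constructor
  · exact fun Y hpd htr => SpectahedronAux.part1 hpd htr
  · intro Vbar ζ hVb hζ EntGrad hEG
    have hA : (Vbar - ζ).IsHermitian := hVb.sub hζ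
    obtain ⟨hpsd, htr1, hmin⟩ := SpectahedronAux.part2 hn hA
    refine ⟨⟨hpsd, htr1⟩, ?_⟩
    rintro W ⟨hWpsd, hWtr⟩
    set c : ℝ := 1 - Real.log ((NormedSpace.exp Vbar).trace) with hc
    have hM : ζ - EntGrad = -(Vbar - ζ) - c • (1 : Matrix (Fin n) (Fin n) ℝ) := by
      rw [hEG]
      module
    have htrW : ∀ X : Matrix (Fin n) (Fin n) ℝ, X.trace = 1 →
        (X * (ζ - EntGrad)).trace = -(X * (Vbar - ζ)).trace - c := by
      intro X hX
      rw [hM, mul_sub, mul_neg, trace_sub, trace_neg, mul_smul_comm, mul_one, trace_smul, hX]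
      simp
    rw [htrW _ htr1, htrW _ hWtr]
    have := hmin W hWpsd hWtr
    linarith
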